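/- arXiv:2012.08289 — 2 statements merged into one kernel-verified Lean document; each statement's English description precedes it below -/
import Mathlib

section
/- Let f : [a,b] → ℝ^d be C⁴ with f(a) = f(b) = 0 and f'(a) = f'(b) = 0 (i.e., f and f' vanish at both endpoints). Then ‖f‖_{L^∞([a,b])} ≤ c · (b−a)⁴ · ‖f⁽⁴⁾‖_{L^∞([a,b])} for a universal constant c (e.g. c = 1 suffices after suitable normalization; any explicit constant such as 1/16 · 1/24 is acceptable). -/
open Set

private lemma iterDW_eq {E : Type*} [NormedAddCommGroup E] [NormedSpace ℝ E]
    {f : ℝ → E} {n m : ℕ} (hm : (m : ℕ∞) ≤ (n : ℕ∞))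
    (hf : ContDiff ℝ (n : ℕ∞) f) {s : Set ℝ} (hs : UniqueDiffOn ℝ s) {x : ℝ} (hx : x ∈ s) :
    iteratedDerivWithin m f s x = iteratedDeriv m f x := by
  have h := contDiff_iff_ftaylorSeries.mp hf
  rw [iteratedDerivWithin_eq_iteratedFDerivWithin, iteratedDeriv_eq_iteratedFDeriv,
    ← (h.hasFTaylorSeriesUpToOn s).eq_iteratedFDerivWithin_of_uniqueDiffOn (by exact_mod_cast hm) hs hx,
    h.eq_iteratedFDeriv (by exact_mod_cast hm) x]

set_option maxHeartbeats 800000 in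
theorem sup_bound_double_zeros :
    ∃ c : ℝ, 0 < c ∧ ∀ (d : ℕ) (f : ℝ → EuclideanSpace ℝ (Fin d)) (a b M : ℝ),
      ContDiff ℝ 4 f → a < b →
      f a = 0 → f b = 0 → deriv f a = 0 → deriv f b = 0 →
      (∀ s ∈ Icc a b, ‖iteratedDeriv 4 f s‖ ≤ M) →
      ∀ t ∈ Icc a b, ‖f t‖ ≤ c * (b - a) ^ 4 * M := by
  refine ⟨8, by norm_num, fun d f a b M hf hab hfa hfb hfa' hfb' hM t ht => ?_⟩
  set h := b - a with hh
  clear_value h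
  have hh0 : 0 < h := hh ▸ sub_pos.mpr hab
  have hab' : a ≤ b := hab.le
  have hs : UniqueDiffOn ℝ (Icc a b) := uniqueDiffOn_Icc hab
  have haI : a ∈ Icc a b := left_mem_Icc.mpr hab'
  have hbI : b ∈ Icc a b := right_mem_Icc.mpr hab'
  have hM0 : 0 ≤ M := le_trans (norm_nonneg _) (hM a haI)
  have hf4 : ContDiff ℝ (4 : ℕ∞) f := hf
  set g := deriv f with hg
  have hg3 : ContDiff ℝ (3 : ℕ∞) g := by
    have := (contDiff_succ_iff_deriv (n := 3)).mp (by exact_mod_cast hf)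
    exact_mod_cast this.2.2
  set A := iteratedDeriv 2 f a with hA
  set B := iteratedDeriv 3 f a with hB
  -- Taylor polynomial of f at a, order 3
  have hT : ∀ x : ℝ, taylorWithinEval f 3 (Icc a b) a x
      = ((2:ℝ)⁻¹ * (x - a) ^ 2) • A + ((6:ℝ)⁻¹ * (x - a) ^ 3) • B := by
    intro x
    rw [taylor_within_apply]
    have h0 : iteratedDerivWithin 0 f (Icc a b) a = 0 := by simpa using hfa
    have h1 : iteratedDerivWithin 1 f (Icc a b) a = 0 := by
      rw [iterDW_eq (by norm_num) hf4 hs haI, iteratedDeriv_one]; exact hfa'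
    have h2 : iteratedDerivWithin 2 f (Icc a b) a = A := by
      rw [iterDW_eq (by norm_num) hf4 hs haI]
    have h3 : iteratedDerivWithin 3 f (Icc a b) a = B := by
      rw [iterDW_eq (by norm_num) hf4 hs haI]
    simp [Finset.sum_range_succ, h0, h1, h2, h3]
    norm_num [Nat.factorial]
  -- Taylor bound for f
  have htb : ∀ x ∈ Icc a b, ‖f x - (((2:ℝ)⁻¹ * (x - a) ^ 2) • A + ((6:ℝ)⁻¹ * (x - a) ^ 3) • B)‖
      ≤ M * (x - a) ^ 4 / 6 := by
    intro x hx
    have := taylor_mean_remainder_bound (n := 3) hab' (hf4.contDiffOn) hx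
      (fun y hy => by rw [iterDW_eq le_rfl hf4 hs hy]; exact hM y hy)
    rw [hT x] at this
    have h6 : ((Nat.factorial 3 : ℕ) : ℝ) = 6 := by norm_num [Nat.factorial]
    simpa [h6] using this
  -- Taylor polynomial of g at a, order 2
  have hgT : ∀ x : ℝ, taylorWithinEval g 2 (Icc a b) a x
      = (x - a) • A + ((2:ℝ)⁻¹ * (x - a) ^ 2) • B := by
    intro x
    rw [taylor_within_apply]
    have h0 : iteratedDerivWithin 0 g (Icc a b) a = 0 := by simpa using hfa'
    have h1 : iteratedDerivWithin 1 g (Icc a b) a = A := by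
      rw [iterDW_eq (by norm_num) hg3 hs haI]
      exact (congrFun (iteratedDeriv_succ' (n := 1) (f := f)) a).symm
    have h2 : iteratedDerivWithin 2 g (Icc a b) a = B := by
      rw [iterDW_eq (by norm_num) hg3 hs haI]
      exact (congrFun (iteratedDeriv_succ' (n := 2) (f := f)) a).symm
    simp [Finset.sum_range_succ, h0, h1, h2]
  have hgtb : ‖g b - ((b - a) • A + ((2:ℝ)⁻¹ * (b - a) ^ 2) • B)‖ ≤ M * (b - a) ^ 3 / 2 := by
    have := taylor_mean_remainder_bound (n := 2) hab' (hg3.contDiffOn) hbI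
      (fun y hy => by
        rw [iterDW_eq le_rfl hg3 hs hy, ← iteratedDeriv_succ']
        exact hM y hy)
    rw [hgT b] at this
    simpa using this
  -- bounds at b
  have e1 : ‖((2:ℝ)⁻¹ * h ^ 2) • A + ((6:ℝ)⁻¹ * h ^ 3) • B‖ ≤ M * h ^ 4 / 6 := by
    have := htb b hbI
    rw [hfb, zero_sub, norm_neg] at this
    simpa [hh] using this
  have e2 : ‖h • A + ((2:ℝ)⁻¹ * h ^ 2) • B‖ ≤ M * h ^ 3 / 2 := by
    have := hgtb
    rw [hfb', zero_sub, norm_neg] at this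
    simpa [hh] using this
  -- solve for B and A
  have hBbd : ‖B‖ ≤ 5 * M * h := by
    have key : ((h ^ 4 / 12 : ℝ)) • B
        = ((h:ℝ)^2 / 2) • (h • A + ((2:ℝ)⁻¹ * h ^ 2) • B)
          - h • (((2:ℝ)⁻¹ * h ^ 2) • A + ((6:ℝ)⁻¹ * h ^ 3) • B) := by
      module
    have := norm_sub_le (((h:ℝ)^2 / 2) • (h • A + ((2:ℝ)⁻¹ * h ^ 2) • B))
        (h • (((2:ℝ)⁻¹ * h ^ 2) • A + ((6:ℝ)⁻¹ * h ^ 3) • B))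
    rw [← key] at this
    rw [norm_smul, norm_smul, norm_smul, Real.norm_eq_abs, Real.norm_eq_abs,
      Real.norm_eq_abs, abs_of_pos (by positivity), abs_of_pos (by positivity),
      abs_of_pos hh0] at this
    have h1 : h ^ 2 / 2 * ‖h • A + ((2:ℝ)⁻¹ * h ^ 2) • B‖ ≤ h ^ 2 / 2 * (M * h ^ 3 / 2) :=
      mul_le_mul_of_nonneg_left e2 (by positivity)
    have h2 : h * ‖((2:ℝ)⁻¹ * h ^ 2) • A + ((6:ℝ)⁻¹ * h ^ 3) • B‖ ≤ h * (M * h ^ 4 / 6) :=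
      mul_le_mul_of_nonneg_left e1 hh0.le
    have hfin2 : h ^ 4 / 12 * ‖B‖ ≤ h ^ 4 / 12 * (5 * M * h) := by nlinarith
    exact le_of_mul_le_mul_left hfin2 (by positivity)
  have hAbd : ‖A‖ ≤ 3 * M * h ^ 2 := by
    have key : (h : ℝ) • A = (h • A + ((2:ℝ)⁻¹ * h ^ 2) • B) - ((2:ℝ)⁻¹ * h ^ 2) • B := by
      module
    have := norm_sub_le (h • A + ((2:ℝ)⁻¹ * h ^ 2) • B) (((2:ℝ)⁻¹ * h ^ 2) • B)
    rw [← key, norm_smul, norm_smul, Real.norm_eq_abs, Real.norm_eq_abs,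
      abs_of_pos hh0, abs_of_pos (by positivity)] at this
    have h2 : 2⁻¹ * h ^ 2 * ‖B‖ ≤ 2⁻¹ * h ^ 2 * (5 * M * h) :=
      mul_le_mul_of_nonneg_left hBbd (by positivity)
    have hfin2 : h * ‖A‖ ≤ h * (3 * M * h ^ 2) := by nlinarith
    exact le_of_mul_le_mul_left hfin2 hh0
  -- conclude
  have hta : 0 ≤ t - a ∧ t - a ≤ h := ⟨sub_nonneg.mpr ht.1, by simp [hh]; linarith [ht.2]⟩
  have hfin := htb t ht
  have hTb : ‖((2:ℝ)⁻¹ * (t - a) ^ 2) • A + ((6:ℝ)⁻¹ * (t - a) ^ 3) • B‖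
      ≤ 2⁻¹ * h ^ 2 * (3 * M * h ^ 2) + 6⁻¹ * h ^ 3 * (5 * M * h) := by
    refine le_trans (norm_add_le _ _) ?_
    rw [norm_smul, norm_smul, Real.norm_eq_abs, Real.norm_eq_abs]
    have hA' : |(2:ℝ)⁻¹ * (t - a) ^ 2| * ‖A‖ ≤ 2⁻¹ * h ^ 2 * (3 * M * h ^ 2) := by
      rw [abs_of_nonneg (by positivity)]
      have h2 : (t - a) ^ 2 ≤ h ^ 2 := pow_le_pow_left₀ hta.1 hta.2 2
      exact mul_le_mul (by linarith) hAbd (norm_nonneg _) (by positivity)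
    have hB' : |(6:ℝ)⁻¹ * (t - a) ^ 3| * ‖B‖ ≤ 6⁻¹ * h ^ 3 * (5 * M * h) := by
      rw [abs_of_nonneg (mul_nonneg (by norm_num) (pow_nonneg hta.1 3))]
      have h3 : (t - a) ^ 3 ≤ h ^ 3 := pow_le_pow_left₀ hta.1 hta.2 3
      exact mul_le_mul (by linarith) hBbd (norm_nonneg _) (by positivity)
    linarith
  calc ‖f t‖ = ‖f t - (((2:ℝ)⁻¹ * (t - a) ^ 2) • A + ((6:ℝ)⁻¹ * (t - a) ^ 3) • B)
        + (((2:ℝ)⁻¹ * (t - a) ^ 2) • A + ((6:ℝ)⁻¹ * (t - a) ^ 3) • B)‖ := by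
        rw [sub_add_cancel]
    _ ≤ ‖f t - (((2:ℝ)⁻¹ * (t - a) ^ 2) • A + ((6:ℝ)⁻¹ * (t - a) ^ 3) • B)‖
        + ‖((2:ℝ)⁻¹ * (t - a) ^ 2) • A + ((6:ℝ)⁻¹ * (t - a) ^ 3) • B‖ := norm_add_le _ _
    _ ≤ M * (t - a) ^ 4 / 6 + (2⁻¹ * h ^ 2 * (3 * M * h ^ 2) + 6⁻¹ * h ^ 3 * (5 * M * h)) :=
        add_le_add hfin hTb
    _ ≤ 8 * h ^ 4 * M := by
        have h4 : (t - a) ^ 4 ≤ h ^ 4 := pow_le_pow_left₀ hta.1 hta.2 4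
        nlinarith [mul_le_mul_of_nonneg_left h4 hM0, pow_pos hh0 4]
end

section
/- (Stability of the interpolation b.v.p. in the scalar comparison form) Suppose w : [0,ℓ] → ℝ^n is C² and the function φ(t) = |w(t)| satisfies φ'' ≥ −K·φ in the distributional sense on (0,ℓ) for some K ≥ 0 with ℓ√K ≤ π/2, and w(0) = 0. Then φ(t) ≤ φ(ℓ) · sin(√K t)/sin(√K ℓ) for t ∈ [0,ℓ] (with the convention sin(√K t)/sin(√K ℓ) → t/ℓ as K → 0); in particular sup_{[0,ℓ]} |w| ≤ |w(ℓ)|. -/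
open Set

theorem comparison_aux (K ℓ α : ℝ) (hK : 0 ≤ K) (hℓ : 0 < ℓ) (hα : K < α ^ 2)
    (φ ψ ψ' v v' : ℝ → ℝ)
    (hφcont : Continuous φ)
    (hφC2 : ∀ t ∈ Ioo 0 ℓ, 0 < φ t → ContDiffAt ℝ 2 φ t)
    (hφ'' : ∀ t ∈ Ioo 0 ℓ, 0 < φ t → -K * φ t ≤ deriv (deriv φ) t)
    (hψd : ∀ t, HasDerivAt ψ (ψ' t) t)
    (hψd2 : ∀ t, HasDerivAt ψ' (-K * ψ t) t)
    (hψ0 : ∀ t ∈ Icc 0 ℓ, 0 ≤ ψ t)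
    (hvd : ∀ t, HasDerivAt v (v' t) t)
    (hvd2 : ∀ t, HasDerivAt v' (-α ^ 2 * v t) t)
    (hv0 : ∀ t ∈ Icc 0 ℓ, 0 < v t)
    (hend0 : φ 0 ≤ ψ 0) (hendl : φ ℓ ≤ ψ ℓ) :
    ∀ t ∈ Icc 0 ℓ, φ t ≤ ψ t := by
  by_contra hcon
  push_neg at hcon
  obtain ⟨t₁, ht₁, ht₁'⟩ := hcon
  have hψdiff : Differentiable ℝ ψ := fun t => (hψd t).differentiableAt
  have hvdiff : Differentiable ℝ v := fun t => (hvd t).differentiableAt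
  have hψcont : Continuous ψ := hψdiff.continuous
  have hvcont : Continuous v := hvdiff.continuous
  -- the quotient attains its max
  set g : ℝ → ℝ := fun t => (φ t - ψ t) / v t with hgdef
  have hgc : ContinuousOn g (Icc 0 ℓ) :=
    ((hφcont.sub hψcont).continuousOn).div hvcont.continuousOn
      (fun t ht => (hv0 t ht).ne')
  obtain ⟨t₀, ht₀mem, ht₀max⟩ :=
    isCompact_Icc.exists_isMaxOn (nonempty_Icc.2 hℓ.le) hgc
  set m : ℝ := g t₀ with hmdef
  have hm : 0 < m :=
    lt_of_lt_of_le (div_pos (sub_pos.2 ht₁') (hv0 t₁ ht₁)) (ht₀max ht₁)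
  have hub : ∀ t ∈ Icc 0 ℓ, φ t - ψ t ≤ m * v t := fun t ht =>
    (div_le_iff₀ (hv0 t ht)).1 (ht₀max ht)
  have heq : φ t₀ - ψ t₀ = m * v t₀ := by
    rw [hmdef, hgdef]
    exact (div_mul_cancel₀ _ (hv0 t₀ ht₀mem).ne').symm
  -- t₀ is interior
  have ht₀0 : t₀ ≠ 0 := by
    intro h
    have : m ≤ 0 := by
      rw [hmdef, hgdef, h]
      exact div_nonpos_of_nonpos_of_nonneg (sub_nonpos.2 hend0) (hv0 0 (by simp [hℓ.le])).le
    linarith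
  have ht₀ℓ : t₀ ≠ ℓ := by
    intro h
    have : m ≤ 0 := by
      rw [hmdef, hgdef, h]
      exact div_nonpos_of_nonpos_of_nonneg (sub_nonpos.2 hendl) (hv0 ℓ (by simp [hℓ.le])).le
    linarith
  have ht₀ : t₀ ∈ Ioo 0 ℓ :=
    ⟨lt_of_le_of_ne ht₀mem.1 (Ne.symm ht₀0), lt_of_le_of_ne ht₀mem.2 ht₀ℓ⟩
  have hφpos : 0 < φ t₀ := by
    have h1 : 0 < m * v t₀ := mul_pos hm (hv0 t₀ ht₀mem)
    have h2 := hψ0 t₀ ht₀mem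
    linarith [heq]
  -- the touching function p
  set p : ℝ → ℝ := fun t => φ t - ψ t - m * v t with hpdef
  have hpcont : Continuous p := (hφcont.sub hψcont).sub (continuous_const.mul hvcont)
  have hple : ∀ t ∈ Icc 0 ℓ, p t ≤ 0 := fun t ht => sub_nonpos.2 (hub t ht)
  have hpt₀ : p t₀ = 0 := by rw [hpdef]; simp [heq]
  have hlocmax : IsLocalMax p t₀ := by
    refine IsMaxOn.isLocalMax (fun t ht => ?_) (Icc_mem_nhds ht₀.1 ht₀.2)
    simp only [hpt₀]
    exact hple t ht
  have hderiv0 : deriv p t₀ = 0 := hlocmax.deriv_eq_zero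
  -- a nice open neighborhood of t₀
  obtain ⟨u, hu, hcd⟩ := (hφC2 t₀ ht₀ hφpos).contDiffOn le_rfl (by simp)
  obtain ⟨V₀, hV₀u, hV₀open, ht₀V₀⟩ := mem_nhds_iff.1 hu
  set V : Set ℝ := V₀ ∩ (Ioo 0 ℓ ∩ φ ⁻¹' Ioi 0) with hVdef
  have hVopen : IsOpen V :=
    hV₀open.inter (isOpen_Ioo.inter (isOpen_Ioi.preimage hφcont))
  have ht₀V : t₀ ∈ V := ⟨ht₀V₀, ht₀, hφpos⟩
  have hcdV : ContDiffOn ℝ 2 φ V := hcd.mono (fun x hx => hV₀u hx.1)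
  -- derivative of p on V
  have hφdiff : ∀ t ∈ V, DifferentiableAt ℝ φ t := fun t ht =>
    (hcdV.differentiableOn (by norm_num) t ht).differentiableAt (hVopen.mem_nhds ht)
  have hderivp : ∀ t ∈ V, deriv p t = deriv φ t - ψ' t - m * v' t := by
    intro t ht
    have h1 : HasDerivAt p (deriv φ t - ψ' t - m * v' t) t :=
      (((hφdiff t ht).hasDerivAt).sub (hψd t)).sub ((hvd t).const_mul m)
    exact h1.deriv
  have hev : deriv p =ᶠ[nhds t₀] fun t => deriv φ t - ψ' t - m * v' t :=
    Filter.eventuallyEq_of_mem (hVopen.mem_nhds ht₀V) hderivp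
  -- second derivative
  have hφ'diff : DifferentiableAt ℝ (deriv φ) t₀ :=
    ((hcdV.deriv_of_isOpen hVopen (m := 1) le_rfl).differentiableOn one_ne_zero t₀
      ht₀V).differentiableAt (hVopen.mem_nhds ht₀V)
  set D : ℝ := deriv (deriv φ) t₀ - -K * ψ t₀ - m * (-α ^ 2 * v t₀) with hDdef
  have hQ : HasDerivAt (fun t => deriv φ t - ψ' t - m * v' t) D t₀ :=
    ((hφ'diff.hasDerivAt).sub (hψd2 t₀)).sub ((hvd2 t₀).const_mul m)
  have hDp : HasDerivAt (deriv p) D t₀ := (hev.hasDerivAt_iff).2 hQ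
  have hDpos : 0 < D := by
    have h1 := hφ'' t₀ ht₀ hφpos
    have h2 : 0 < v t₀ := hv0 t₀ ht₀mem
    have h3 : 0 < m * v t₀ * (α ^ 2 - K) :=
      mul_pos (mul_pos hm h2) (sub_pos.2 hα)
    rw [hDdef]
    nlinarith [heq]
  -- deriv p is positive just to the right of t₀
  have hslope : ∀ᶠ y in nhdsWithin t₀ (Ioi t₀), 0 < deriv p y := by
    have h1 : Filter.Tendsto (slope (deriv p) t₀) (nhdsWithin t₀ {t₀}ᶜ) (nhds D) :=
      hasDerivAt_iff_tendsto_slope.1 hDp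
    have h2 : ∀ᶠ y in nhdsWithin t₀ {t₀}ᶜ, 0 < slope (deriv p) t₀ y :=
      h1.eventually (lt_mem_nhds hDpos)
    have h3 : ∀ᶠ y in nhdsWithin t₀ (Ioi t₀), 0 < slope (deriv p) t₀ y :=
      h2.filter_mono (nhdsWithin_mono t₀ (fun y hy => ne_of_gt hy))
    filter_upwards [h3, self_mem_nhdsWithin] with y hy hy'
    have hy'' : 0 < y - t₀ := sub_pos.2 hy'
    have : slope (deriv p) t₀ y = deriv p y / (y - t₀) := by
      rw [slope_def_field, hderiv0]; ring
    rw [this] at hy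
    have := mul_pos hy hy''
    rwa [div_mul_cancel₀ _ (ne_of_gt hy'')] at this
  have hlt : ∀ᶠ y in nhdsWithin t₀ (Ioi t₀), y < ℓ :=
    eventually_nhdsWithin_of_eventually_nhds (eventually_lt_nhds ht₀.2)
  obtain ⟨u', hu', hsub⟩ := mem_nhdsGT_iff_exists_Ioo_subset.1 (hslope.and hlt)
  rw [mem_Ioi] at hu'
  set t' : ℝ := (t₀ + u') / 2 with ht'def
  have ht'mem : t' ∈ Ioo t₀ u' := ⟨by rw [ht'def]; linarith, by rw [ht'def]; linarith⟩
  have ht'ℓ : t' < ℓ := (hsub ht'mem).2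
  have hmono : StrictMonoOn p (Icc t₀ t') := by
    apply strictMonoOn_of_deriv_pos (convex_Icc t₀ t') hpcont.continuousOn
    intro x hx
    rw [interior_Icc] at hx
    exact (hsub ⟨hx.1, lt_of_lt_of_le hx.2 (le_of_lt ht'mem.2)⟩).1
  have hfin : p t₀ < p t' :=
    hmono (left_mem_Icc.2 ht'mem.1.le) (right_mem_Icc.2 ht'mem.1.le) ht'mem.1
  have : p t' ≤ 0 := hple t' ⟨le_trans ht₀mem.1 ht'mem.1.le, ht'ℓ.le⟩
  rw [hpt₀] at hfin
  linarith

theorem scalar_comparison_stability (n : ℕ) (K ℓ : ℝ) (hK : 0 ≤ K) (hℓ : 0 < ℓ)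
    (hshort : ℓ * Real.sqrt K ≤ Real.pi / 2)
    (w : ℝ → EuclideanSpace ℝ (Fin n)) (hw : ContDiff ℝ 2 w) (h0 : w 0 = 0)
    (hineq : ∀ t ∈ Ioo 0 ℓ, 0 < ‖w t‖ →
      -K * ‖w t‖ ≤ iteratedDeriv 2 (fun s => ‖w s‖) t) :
    (∀ t ∈ Icc 0 ℓ, ‖w t‖ ≤ ‖w ℓ‖ *
      (if K = 0 then t / ℓ
       else Real.sin (Real.sqrt K * t) / Real.sin (Real.sqrt K * ℓ))) ∧
    ∀ t ∈ Icc 0 ℓ, ‖w t‖ ≤ ‖w ℓ‖ := by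
  have hπ : 0 < Real.pi := Real.pi_pos
  set r : ℝ := Real.sqrt K with hrdef
  have hr0 : 0 ≤ r := Real.sqrt_nonneg K
  have hrK : r ^ 2 = K := Real.sq_sqrt hK
  have hrπ : r < Real.pi / ℓ := by
    rw [lt_div_iff₀ hℓ]
    rw [mul_comm] at hshort
    nlinarith [hπ]
  set α : ℝ := (r + Real.pi / ℓ) / 2 with hαdef
  have hαr : r < α := by rw [hαdef]; linarith
  have hα0 : 0 < α := lt_of_le_of_lt hr0 hαr
  have hαπ : α * ℓ < Real.pi := by
    rw [hαdef]
    rw [div_mul_eq_mul_div, div_lt_iff₀ (by norm_num : (0:ℝ) < 2)]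
    have : Real.pi / ℓ * ℓ = Real.pi := div_mul_cancel₀ _ hℓ.ne'
    nlinarith [hrπ, hℓ]
  have hαK : K < α ^ 2 := by nlinarith [hαr, hr0, hrK]
  -- the comparison perturbation v
  set v : ℝ → ℝ := fun t => Real.cos (α * t - α * ℓ / 2) with hvdef
  set v' : ℝ → ℝ := fun t => -Real.sin (α * t - α * ℓ / 2) * α with hv'def
  have hinner : ∀ t : ℝ, HasDerivAt (fun s : ℝ => α * s - α * ℓ / 2) α t := by
    intro t
    simpa using ((hasDerivAt_id t).const_mul α).sub_const (α * ℓ / 2)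
  have hvd : ∀ t, HasDerivAt v (v' t) t := fun t => by
    have := (Real.hasDerivAt_cos (α * t - α * ℓ / 2)).comp t (hinner t); exact this
  have hvd2 : ∀ t, HasDerivAt v' (-α ^ 2 * v t) t := by
    intro t
    have h1 : HasDerivAt (fun s => Real.sin (α * s - α * ℓ / 2))
        (Real.cos (α * t - α * ℓ / 2) * α) t :=
      by have := (Real.hasDerivAt_sin (α * t - α * ℓ / 2)).comp t (hinner t); exact this
    have h2 := (h1.neg).mul_const α
    rw [show -α ^ 2 * v t = -(Real.cos (α * t - α * ℓ / 2) * α) * α by rw [hvdef]; ring]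
    exact h2
  have hv0 : ∀ t ∈ Icc 0 ℓ, 0 < v t := by
    intro t ht
    apply Real.cos_pos_of_mem_Ioo
    constructor
    · have : 0 ≤ α * t := mul_nonneg hα0.le ht.1
      nlinarith [hαπ]
    · have : α * t ≤ α * ℓ := mul_le_mul_of_nonneg_left ht.2 hα0.le
      nlinarith [hαπ]
  -- φ
  set φ : ℝ → ℝ := fun s => ‖w s‖ with hφdef
  have hφcont : Continuous φ := hw.continuous.norm
  have hφC2 : ∀ t ∈ Ioo 0 ℓ, 0 < φ t → ContDiffAt ℝ 2 φ t := by
    intro t _ hpos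
    exact (hw.contDiffAt).norm ℝ (by simpa [hφdef, norm_pos_iff] using hpos)
  have hφ'' : ∀ t ∈ Ioo 0 ℓ, 0 < φ t → -K * φ t ≤ deriv (deriv φ) t := by
    intro t ht hpos
    have := hineq t ht hpos
    rwa [show iteratedDeriv 2 (fun s => ‖w s‖) = deriv (deriv φ) by
      simp [iteratedDeriv_succ, iteratedDeriv_zero, hφdef]] at this
  have hφ0 : φ 0 = 0 := by simp [hφdef, h0]
  rcases eq_or_lt_of_le hK with hK0 | hKpos
  · -- case K = 0
    subst hK0
    set ψ : ℝ → ℝ := fun t => ‖w ℓ‖ * (t / ℓ) with hψdef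
    set ψ' : ℝ → ℝ := fun _ => ‖w ℓ‖ * (1 / ℓ) with hψ'def
    have hψd : ∀ t, HasDerivAt ψ (ψ' t) t := fun t =>
      ((hasDerivAt_id t).div_const ℓ).const_mul ‖w ℓ‖
    have hψd2 : ∀ t, HasDerivAt ψ' (-0 * ψ t) t := by
      intro t
      have h1 : HasDerivAt ψ' 0 t := hasDerivAt_const t (‖w ℓ‖ * (1 / ℓ))
      convert h1 using 1
      ring
    have hψ0 : ∀ t ∈ Icc 0 ℓ, 0 ≤ ψ t := fun t ht =>
      mul_nonneg (norm_nonneg _) (div_nonneg ht.1 hℓ.le)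
    have hend0 : φ 0 ≤ ψ 0 := by
      rw [hφ0, hψdef]; simp
    have hendl : φ ℓ ≤ ψ ℓ := by
      rw [hψdef]; simp [div_self hℓ.ne', hφdef]
    have H := comparison_aux 0 ℓ α le_rfl hℓ hαK φ ψ ψ' v v' hφcont hφC2 hφ''
      hψd hψd2 hψ0 hvd hvd2 hv0 hend0 hendl
    have H2 : ∀ t ∈ Icc 0 ℓ, ψ t ≤ ‖w ℓ‖ := by
      intro t ht
      calc ψ t ≤ ‖w ℓ‖ * 1 :=
            mul_le_mul_of_nonneg_left ((div_le_one hℓ).2 ht.2) (norm_nonneg _)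
        _ = ‖w ℓ‖ := mul_one _
    constructor
    · intro t ht
      rw [if_pos rfl]
      exact H t ht
    · exact fun t ht => (H t ht).trans (H2 t ht)
  · -- case K > 0
    have hr : 0 < r := Real.sqrt_pos.2 hKpos
    have hrℓπ : r * ℓ < Real.pi := by
      rw [mul_comm] at hshort; nlinarith [hπ]
    have hsl : 0 < Real.sin (r * ℓ) :=
      Real.sin_pos_of_pos_of_lt_pi (mul_pos hr hℓ) hrℓπ
    set ψ : ℝ → ℝ := fun t => ‖w ℓ‖ * (Real.sin (r * t) / Real.sin (r * ℓ)) with hψdef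
    set ψ' : ℝ → ℝ := fun t => ‖w ℓ‖ * (Real.cos (r * t) * r / Real.sin (r * ℓ)) with hψ'def
    have hinner2 : ∀ t : ℝ, HasDerivAt (fun s : ℝ => r * s) r t := by
      intro t
      simpa using (hasDerivAt_id t).const_mul r
    have hψd : ∀ t, HasDerivAt ψ (ψ' t) t := fun t =>
      ((((Real.hasDerivAt_sin (r * t)).comp t (hinner2 t)).div_const
        (Real.sin (r * ℓ))).const_mul ‖w ℓ‖)
    have hψd2 : ∀ t, HasDerivAt ψ' (-K * ψ t) t := by
      intro t
      have h1 : HasDerivAt ψ' (‖w ℓ‖ * (-Real.sin (r * t) * r * r / Real.sin (r * ℓ))) t :=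
        ((((Real.hasDerivAt_cos (r * t)).comp t (hinner2 t)).mul_const
          r).div_const (Real.sin (r * ℓ))).const_mul ‖w ℓ‖
      convert h1 using 1
      rw [hψdef, ← hrK]
      ring
    have hsinnn : ∀ t ∈ Icc 0 ℓ, 0 ≤ Real.sin (r * t) := by
      intro t ht
      apply Real.sin_nonneg_of_nonneg_of_le_pi (mul_nonneg hr0 ht.1)
      have := mul_le_mul_of_nonneg_left ht.2 hr0
      linarith [hrℓπ]
    have hψ0 : ∀ t ∈ Icc 0 ℓ, 0 ≤ ψ t := fun t ht =>
      mul_nonneg (norm_nonneg _) (div_nonneg (hsinnn t ht) hsl.le)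
    have hend0 : φ 0 ≤ ψ 0 := by
      rw [hφ0]; exact hψ0 0 ⟨le_refl 0, hℓ.le⟩
    have hendl : φ ℓ ≤ ψ ℓ := by
      rw [hψdef]; simp [div_self hsl.ne', hφdef]
    have H := comparison_aux K ℓ α hK hℓ hαK φ ψ ψ' v v' hφcont hφC2 hφ''
      hψd hψd2 hψ0 hvd hvd2 hv0 hend0 hendl
    have H2 : ∀ t ∈ Icc 0 ℓ, ψ t ≤ ‖w ℓ‖ := by
      intro t ht
      have hsle : Real.sin (r * t) ≤ Real.sin (r * ℓ) := by
        apply Real.sin_le_sin_of_le_of_le_pi_div_two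
        · nlinarith [mul_nonneg hr0 ht.1, Real.pi_div_two_pos]
        · rw [mul_comm]; exact hshort
        · exact mul_le_mul_of_nonneg_left ht.2 hr0
      calc ψ t ≤ ‖w ℓ‖ * 1 :=
            mul_le_mul_of_nonneg_left ((div_le_one hsl).2 hsle) (norm_nonneg _)
        _ = ‖w ℓ‖ := mul_one _
    constructor
    · intro t ht
      rw [if_neg hKpos.ne']
      exact H t ht
    · exact fun t ht => (H t ht).trans (H2 t ht)
end
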